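/- arXiv:2202.06025 — 2 statements merged into one kernel-verified Lean document; each statement's English description precedes it below -/
import Mathlib

section
/- The iterated integral over the region {(x_1,x_2,x_3) : 0 ≤ x_3, x_1+x_2+x_3 ≤ d, computed as in the notched case with parameter v (0 ≤ v ≤ d/4)} — namely the sum of the six iterated integrals: ∫_0^v∫_{d-3x_1}^{d-x_1}∫_{(d-x_1-x_2)/2}^{d-x_1-x_2}, ∫_v^{d-3v}∫_{d-x_1-2v}^{d-x_1}∫_{(d-x_1-x_2)/2}^{d-x_1-x_2}, ∫_{d-3v}^{d}∫_{(d-x_1)/3}^{d-x_1}∫_{(d-x_1-x_2)/2}^{d-x_1-x_2}, ∫_v^{d-3v}∫_v^{d-x_1-2v}∫_{d-x_1-x_2-v}^{d-x_1-x_2}, ∫_0^v∫_{x_1}^{d-3x_1}∫_{d-2x_1-x_2}^{d-x_1-x_2}, and ∫_0^v∫_{x_2}^{d-3x_2}∫_{d-x_1-2x_2}^{d-x_1-x_2}, each with integrand (d-x_1-x_2-x_3) — equals 2v^4 - (4d/3)v^3 + (d^2/4)v^2. -/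
open intervalIntegral

theorem integral_cubic' (a b p q r s : ℝ) :
    (∫ x in a..b, (p + q*x + r*x^2 + s*x^3))
      = (p*b + q*b^2/2 + r*b^3/3 + s*b^4/4) - (p*a + q*a^2/2 + r*a^3/3 + s*a^4/4) := by
  have hd : ∀ x : ℝ, HasDerivAt (fun y => p*y + q*y^2/2 + r*y^3/3 + s*y^4/4)
      (p + q*x + r*x^2 + s*x^3) x := by
    intro x
    have H := ((((hasDerivAt_id x).const_mul p)).add
        (((hasDerivAt_pow 2 x).const_mul q).div_const 2)).add
        ((((hasDerivAt_pow 3 x).const_mul r).div_const 3).add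
          (((hasDerivAt_pow 4 x).const_mul s).div_const 4))
    have hf : (fun y : ℝ => p*y + q*y^2/2 + r*y^3/3 + s*y^4/4)
        = (((fun y : ℝ => p * id y) + fun x : ℝ => q * x ^ 2 / 2)
          + ((fun x : ℝ => r * x ^ 3 / 3) + fun x : ℝ => s * x ^ 4 / 4)) := by
      funext y; simp only [id, Pi.add_apply]; ring
    rw [hf]
    refine H.congr_deriv ?_
    push_cast; ring
  rw [integral_eq_sub_of_hasDerivAt (fun x _ => hd x)
    ((by fun_prop : Continuous fun x : ℝ => p + q*x + r*x^2 + s*x^3).intervalIntegrable a b)]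

theorem T1 (d v : ℝ) :
    (∫ x1 in (0:ℝ)..v, ∫ x2 in (d - 3*x1)..(d - x1),
        ∫ x3 in ((d - x1 - x2)/2)..(d - x1 - x2), (d - x1 - x2 - x3)) = v^4/12 := by
  have e2 : ∀ x1 : ℝ, (∫ x2 in (d - 3*x1)..(d - x1),
      ∫ x3 in ((d - x1 - x2)/2)..(d - x1 - x2), (d - x1 - x2 - x3))
      = 0 + 0*x1 + 0*x1^2 + (1/3)*x1^3 := by
    intro x1
    have e1 : ∀ x2 : ℝ, (∫ x3 in ((d - x1 - x2)/2)..(d - x1 - x2), (d - x1 - x2 - x3))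
        = ((d - x1)^2/8) + (-((d - x1)/4))*x2 + (1/8)*x2^2 + 0*x2^3 := by
      intro x2
      have e0 : ∀ x3 : ℝ, d - x1 - x2 - x3
          = (d - x1 - x2) + (-1)*x3 + 0*x3^2 + 0*x3^3 := fun _ => by ring
      simp only [e0]
      rw [integral_cubic']; ring
    simp only [e1]
    rw [integral_cubic']; ring
  simp only [e2]
  rw [integral_cubic']; ring

theorem T2 (d v : ℝ) :
    (∫ x1 in v..(d - 3*v), ∫ x2 in (d - x1 - 2*v)..(d - x1),
        ∫ x3 in ((d - x1 - x2)/2)..(d - x1 - x2), (d - x1 - x2 - x3))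
      = (d - 4*v)*v^3/3 := by
  have e2 : ∀ x1 : ℝ, (∫ x2 in (d - x1 - 2*v)..(d - x1),
      ∫ x3 in ((d - x1 - x2)/2)..(d - x1 - x2), (d - x1 - x2 - x3))
      = ((1/3)*v^3) + 0*x1 + 0*x1^2 + 0*x1^3 := by
    intro x1
    have e1 : ∀ x2 : ℝ, (∫ x3 in ((d - x1 - x2)/2)..(d - x1 - x2), (d - x1 - x2 - x3))
        = ((d - x1)^2/8) + (-((d - x1)/4))*x2 + (1/8)*x2^2 + 0*x2^3 := by
      intro x2
      have e0 : ∀ x3 : ℝ, d - x1 - x2 - x3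
          = (d - x1 - x2) + (-1)*x3 + 0*x3^2 + 0*x3^3 := fun _ => by ring
      simp only [e0]
      rw [integral_cubic']; ring
    simp only [e1]
    rw [integral_cubic']; ring
  simp only [e2]
  rw [integral_cubic']; ring

theorem T3 (d v : ℝ) :
    (∫ x1 in (d - 3*v)..d, ∫ x2 in ((d - x1)/3)..(d - x1),
        ∫ x3 in ((d - x1 - x2)/2)..(d - x1 - x2), (d - x1 - x2 - x3)) = v^4/4 := by
  have e2 : ∀ x1 : ℝ, (∫ x2 in ((d - x1)/3)..(d - x1),
      ∫ x3 in ((d - x1 - x2)/2)..(d - x1 - x2), (d - x1 - x2 - x3))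
      = (d^3/81) + (-(d^2/27))*x1 + (d/27)*x1^2 + (-(1/81))*x1^3 := by
    intro x1
    have e1 : ∀ x2 : ℝ, (∫ x3 in ((d - x1 - x2)/2)..(d - x1 - x2), (d - x1 - x2 - x3))
        = ((d - x1)^2/8) + (-((d - x1)/4))*x2 + (1/8)*x2^2 + 0*x2^3 := by
      intro x2
      have e0 : ∀ x3 : ℝ, d - x1 - x2 - x3
          = (d - x1 - x2) + (-1)*x3 + 0*x3^2 + 0*x3^3 := fun _ => by ring
      simp only [e0]
      rw [integral_cubic']; ring
    simp only [e1]
    rw [integral_cubic']; ring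
  simp only [e2]
  rw [integral_cubic']; ring

theorem T4 (d v : ℝ) :
    (∫ x1 in v..(d - 3*v), ∫ x2 in v..(d - x1 - 2*v),
        ∫ x3 in (d - x1 - x2 - v)..(d - x1 - x2), (d - x1 - x2 - x3))
      = (v^2/4)*(d - 4*v)^2 := by
  have e2 : ∀ x1 : ℝ, (∫ x2 in v..(d - x1 - 2*v),
      ∫ x3 in (d - x1 - x2 - v)..(d - x1 - x2), (d - x1 - x2 - x3))
      = ((v^2/2)*(d - 3*v)) + (-(v^2/2))*x1 + 0*x1^2 + 0*x1^3 := by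
    intro x1
    have e1 : ∀ x2 : ℝ, (∫ x3 in (d - x1 - x2 - v)..(d - x1 - x2), (d - x1 - x2 - x3))
        = (v^2/2) + 0*x2 + 0*x2^2 + 0*x2^3 := by
      intro x2
      have e0 : ∀ x3 : ℝ, d - x1 - x2 - x3
          = (d - x1 - x2) + (-1)*x3 + 0*x3^2 + 0*x3^3 := fun _ => by ring
      simp only [e0]
      rw [integral_cubic']; ring
    simp only [e1]
    rw [integral_cubic']; ring
  simp only [e2]
  rw [integral_cubic']; ring

theorem T5 (d v : ℝ) :
    (∫ x1 in (0:ℝ)..v, ∫ x2 in x1..(d - 3*x1),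
        ∫ x3 in (d - 2*x1 - x2)..(d - x1 - x2), (d - x1 - x2 - x3))
      = d*v^3/6 - v^4/2 := by
  have e2 : ∀ x1 : ℝ, (∫ x2 in x1..(d - 3*x1),
      ∫ x3 in (d - 2*x1 - x2)..(d - x1 - x2), (d - x1 - x2 - x3))
      = 0 + 0*x1 + (d/2)*x1^2 + (-2)*x1^3 := by
    intro x1
    have e1 : ∀ x2 : ℝ, (∫ x3 in (d - 2*x1 - x2)..(d - x1 - x2), (d - x1 - x2 - x3))
        = (x1^2/2) + 0*x2 + 0*x2^2 + 0*x2^3 := by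
      intro x2
      have e0 : ∀ x3 : ℝ, d - x1 - x2 - x3
          = (d - x1 - x2) + (-1)*x3 + 0*x3^2 + 0*x3^3 := fun _ => by ring
      simp only [e0]
      rw [integral_cubic']; ring
    simp only [e1]
    rw [integral_cubic']; ring
  simp only [e2]
  rw [integral_cubic']; ring

theorem T6 (d v : ℝ) :
    (∫ x2 in (0:ℝ)..v, ∫ x1 in x2..(d - 3*x2),
        ∫ x3 in (d - x1 - 2*x2)..(d - x1 - x2), (d - x1 - x2 - x3))
      = d*v^3/6 - v^4/2 := by
  have e2 : ∀ x2 : ℝ, (∫ x1 in x2..(d - 3*x2),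
      ∫ x3 in (d - x1 - 2*x2)..(d - x1 - x2), (d - x1 - x2 - x3))
      = 0 + 0*x2 + (d/2)*x2^2 + (-2)*x2^3 := by
    intro x2
    have e1 : ∀ x1 : ℝ, (∫ x3 in (d - x1 - 2*x2)..(d - x1 - x2), (d - x1 - x2 - x3))
        = (x2^2/2) + 0*x1 + 0*x1^2 + 0*x1^3 := by
      intro x1
      have e0 : ∀ x3 : ℝ, d - x1 - x2 - x3
          = (d - x1 - x2) + (-1)*x3 + 0*x3^2 + 0*x3^3 := fun _ => by ring
      simp only [e0]
      rw [integral_cubic']; ring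
    simp only [e1]
    rw [integral_cubic']; ring
  simp only [e2]
  rw [integral_cubic']; ring

theorem notched_integral (d v : ℝ) (hv0 : 0 ≤ v) (hv : v ≤ d / 4) :
    (∫ x1 in (0:ℝ)..v, ∫ x2 in (d - 3*x1)..(d - x1),
        ∫ x3 in ((d - x1 - x2)/2)..(d - x1 - x2), (d - x1 - x2 - x3)) +
    (∫ x1 in v..(d - 3*v), ∫ x2 in (d - x1 - 2*v)..(d - x1),
        ∫ x3 in ((d - x1 - x2)/2)..(d - x1 - x2), (d - x1 - x2 - x3)) +
    (∫ x1 in (d - 3*v)..d, ∫ x2 in ((d - x1)/3)..(d - x1),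
        ∫ x3 in ((d - x1 - x2)/2)..(d - x1 - x2), (d - x1 - x2 - x3)) +
    (∫ x1 in v..(d - 3*v), ∫ x2 in v..(d - x1 - 2*v),
        ∫ x3 in (d - x1 - x2 - v)..(d - x1 - x2), (d - x1 - x2 - x3)) +
    (∫ x1 in (0:ℝ)..v, ∫ x2 in x1..(d - 3*x1),
        ∫ x3 in (d - 2*x1 - x2)..(d - x1 - x2), (d - x1 - x2 - x3)) +
    (∫ x2 in (0:ℝ)..v, ∫ x1 in x2..(d - 3*x2),
        ∫ x3 in (d - x1 - 2*x2)..(d - x1 - x2), (d - x1 - x2 - x3))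
      = 2 * v^4 - (4 * d / 3) * v^3 + (d^2 / 4) * v^2 := by
  rw [T1 d v, T2 d v, T3 d v, T4 d v, T5 d v, T6 d v]
  ring
end

section
/- For all real d > 0 and all v ∈ [0, d/4], d^4/24 - (d-4v)^4/24 - 4(2v^4 - (4d/3)v^3 + (d^2/4)v^2) ≤ 11 d^4/343, and in particular d^4/32 ≤ 11 d^4/343. -/
theorem notched_volume_bound (d : ℝ) (hd : 0 < d) :
    (∀ v : ℝ, 0 ≤ v → v ≤ d / 4 →
      d^4 / 24 - (d - 4 * v)^4 / 24
          - 4 * (2 * v^4 - (4 * d / 3) * v^3 + (d^2 / 4) * v^2)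
        ≤ 11 * d^4 / 343) ∧
    d^4 / 32 ≤ 11 * d^4 / 343 := by
  constructor
  · intro v _ _
    nlinarith [mul_nonneg (sq_nonneg (7*v - d)) (sq_nonneg (7*v - 2*d)),
      mul_nonneg (sq_nonneg (7*v - d)) (sq_nonneg d)]
  · nlinarith [pow_pos hd 4]
end
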